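/- Let A be a one-dimensional Noetherian local domain with integral closure Ā (in its fraction field) a DVR, and let B₁, B₂ be intermediate rings A ⊆ Bᵢ ⊆ Ā that are A-algebras, with the conductor of A in Ā nonzero. If φ : B₁ → B₂ is an isomorphism of A-modules fixing A (φ|_A = id), then φ is an isomorphism of A-algebras, i.e. φ(q₁ q₂) = φ(q₁)φ(q₂) for all q₁, q₂ ∈ B₁. -/

import Mathlib

/-- Let `A` be a one-dimensional Noetherian local domain whose integral closure `Ā`
(in its fraction field) is a DVR `V`, with nonzero conductor, and let
`A ⊆ B₁, B₂ ⊆ V` be intermediate rings.  Any `A`-module isomorphism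
`φ : B₁ → B₂` fixing `A` is automatically an isomorphism of `A`-algebras, i.e. it
is multiplicative. -/
theorem module_iso_is_algebra_iso {V : Type*} [CommRing V] [IsDomain V]
    [IsDiscreteValuationRing V]
    (A B₁ B₂ : Subring V) (hAB₁ : A ≤ B₁) (hAB₂ : A ≤ B₂)
    (hNoeth : IsNoetherianRing A) (hLocal : IsLocalRing A)
    (hdim : ringKrullDim A = 1)
    (hint : ∀ v : V, IsIntegral A v)
    (hcond : ∃ α ∈ A, α ≠ 0 ∧ ∀ v : V, α * v ∈ A)
    (φ : V → V) (hmaps : Set.BijOn φ B₁ B₂)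
    (hadd : ∀ x ∈ B₁, ∀ y ∈ B₁, φ (x + y) = φ x + φ y)
    (hlin : ∀ a ∈ A, ∀ x ∈ B₁, φ (a * x) = a * φ x)
    (hid : ∀ a ∈ A, φ a = a) :
    ∀ x ∈ B₁, ∀ y ∈ B₁, φ (x * y) = φ x * φ y := by
  intro x hx y hy
  obtain ⟨α, hαA, hα0, hαcond⟩ := hcond
  have hxy : x * y ∈ B₁ := B₁.mul_mem hx hy
  have hαx : α * x ∈ A := hαcond x
  have h1 : φ (α * (x * y)) = α * φ (x * y) := hlin α hαA _ hxy
  have h2 : φ ((α * x) * y) = (α * x) * φ y := hlin _ hαx y hy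
  have h3 : α * x * y = α * (x * y) := by ring
  have h4 : α * φ x = α * x := by
    have := hlin α hαA x hx
    rw [hid _ hαx] at this
    exact this.symm
  have : α * φ (x * y) = α * (φ x * φ y) := by
    rw [← h1, ← h3, h2, ← mul_assoc, ← h4, mul_assoc]
  exact mul_left_cancel₀ hα0 this
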